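/- Define erfc(x) = (2/√π) ∫_x^∞ e^{-t²} dt. For all S > 0 and H_x, H_y, H_z > 0, ∫_{ℝ³ \ B} exp(-S((x/H_x)² + (y/H_y)² + (z/H_z)²)) dx dy dz ≤ 3 (π/S)^{3/2} H_x H_y H_z · erfc(√S), where B = [-H_x, H_x] × [-H_y, H_y] × [-H_z, H_z]. -/

import Mathlib

open MeasureTheory Set

/-- The complementary error function `erfc(x) = (2/√π) ∫_x^∞ e^{-t²} dt`. -/
noncomputable def erfc (x : ℝ) : ℝ :=
  (2 / Real.sqrt Real.pi) * ∫ t in Set.Ioi x, Real.exp (-t ^ 2)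

lemma gauss_line (S H : ℝ) (hS : 0 < S) (hH : 0 < H) :
    ∫ t : ℝ, Real.exp (-(S / H ^ 2) * t ^ 2) = H * Real.sqrt (Real.pi / S) := by
  rw [integral_gaussian]
  rw [show Real.pi / (S / H ^ 2) = H ^ 2 * (Real.pi / S) by field_simp]
  rw [Real.sqrt_mul (by positivity), Real.sqrt_sq hH.le]

lemma gauss_tail (S H : ℝ) (hS : 0 < S) (hH : 0 < H) :
    ∫ t in (Set.Icc (-H) H)ᶜ, Real.exp (-(S / H ^ 2) * t ^ 2)
      = H * Real.sqrt (Real.pi / S) * erfc (Real.sqrt S) := by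
  have ha : (0:ℝ) < S / H ^ 2 := by positivity
  set a := S / H ^ 2 with ha_def
  set b := Real.sqrt a with hb_def
  have hb : 0 < b := Real.sqrt_pos.mpr ha
  have hbH : b * H = Real.sqrt S := by
    have h1 : a * H ^ 2 = S := by rw [ha_def]; field_simp
    rw [← h1, Real.sqrt_mul ha.le, Real.sqrt_sq hH.le]
  have hint : Integrable (fun t : ℝ => Real.exp (-a * t ^ 2)) :=
    integrable_exp_neg_mul_sq ha
  have hcompl : (Set.Icc (-H) H)ᶜ = Set.Iio (-H) ∪ Set.Ioi H := by
    ext x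
    simp only [Set.mem_compl_iff, Set.mem_Icc, Set.mem_union, Set.mem_Iio, Set.mem_Ioi,
      not_and_or, not_le]
  rw [hcompl]
  rw [setIntegral_union (by
        refine Set.disjoint_left.mpr fun x hx hx' => ?_
        simp only [Set.mem_Iio, Set.mem_Ioi] at hx hx'
        linarith) measurableSet_Ioi hint.integrableOn hint.integrableOn]
  have hIio : ∫ t in Set.Iio (-H), Real.exp (-a * t ^ 2)
      = ∫ t in Set.Ioi H, Real.exp (-a * t ^ 2) := by
    have h := integral_comp_neg_Ioi H (fun t => Real.exp (-a * t ^ 2))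
    simp only [neg_sq] at h
    rw [← integral_Iic_eq_integral_Iio, ← h]
  have hb2 : b ^ 2 = a := Real.sq_sqrt ha.le
  have key : ∀ x : ℝ, Real.exp (-a * x ^ 2) = Real.exp (-(b * x) ^ 2) := fun x => by
    rw [mul_pow, hb2]; ring_nf
  have hIoi : ∫ x in Set.Ioi H, Real.exp (-a * x ^ 2)
      = b⁻¹ * ∫ x in Set.Ioi (Real.sqrt S), Real.exp (-x ^ 2) := by
    simp_rw [key]
    have h2 := integral_comp_mul_left_Ioi (fun x => Real.exp (-x ^ 2)) H hb
    simp only [smul_eq_mul] at h2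
    rw [h2, hbH]
  have hπ : Real.sqrt Real.pi ≠ 0 := by positivity
  have hI : ∫ x in Set.Ioi (Real.sqrt S), Real.exp (-x ^ 2)
      = Real.sqrt Real.pi / 2 * erfc (Real.sqrt S) := by
    rw [erfc]; field_simp
  have hbinv : b⁻¹ = H / Real.sqrt S := by
    rw [hb_def, ha_def, Real.sqrt_div hS.le, Real.sqrt_sq hH.le, inv_div]
  rw [hIio, hIoi, hI, hbinv, Real.sqrt_div Real.pi_pos.le]
  ring

lemma setIntegral_union_le {α : Type*} [MeasurableSpace α] {μ : Measure α}
    {f : α → ℝ} (hf : Integrable f μ) (hnn : ∀ x, 0 ≤ f x)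
    {A B : Set α} (hA : MeasurableSet A) (hB : MeasurableSet B) :
    ∫ x in A ∪ B, f x ∂μ ≤ (∫ x in A, f x ∂μ) + ∫ x in B, f x ∂μ := by
  rw [← Set.union_diff_self, setIntegral_union disjoint_sdiff_self_right (hB.diff hA)
      hf.integrableOn hf.integrableOn]
  refine add_le_add le_rfl ?_
  exact setIntegral_mono_set hf.integrableOn (ae_of_all _ hnn)
    (HasSubset.Subset.eventuallyLE Set.diff_subset)

/-- Window-truncation constant bound for the Gaussian window: the integral of the
anisotropic Gaussian over the complement of the box
`[-H_x,H_x] × [-H_y,H_y] × [-H_z,H_z]` is at most `3(π/S)^{3/2} H_x H_y H_z erfc(√S)`. -/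
theorem gaussian_window_truncation_bound (S Hx Hy Hz : ℝ)
    (hS : 0 < S) (hHx : 0 < Hx) (hHy : 0 < Hy) (hHz : 0 < Hz) :
    (∫ x in (Set.Icc (-Hx) Hx ×ˢ Set.Icc (-Hy) Hy ×ˢ Set.Icc (-Hz) Hz)ᶜ,
        Real.exp (-(S * ((x.1 / Hx) ^ 2 + (x.2.1 / Hy) ^ 2 + (x.2.2 / Hz) ^ 2)))) ≤
      3 * (Real.pi / S) ^ ((3 : ℝ) / 2) * (Hx * Hy * Hz) * erfc (Real.sqrt S) := by
  set s := Set.Icc (-Hx) Hx with hs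
  set t := Set.Icc (-Hy) Hy with ht
  set u := Set.Icc (-Hz) Hz with hu
  set f₁ : ℝ → ℝ := fun v => Real.exp (-(S / Hx ^ 2) * v ^ 2) with hf₁
  set f₂ : ℝ → ℝ := fun v => Real.exp (-(S / Hy ^ 2) * v ^ 2) with hf₂
  set f₃ : ℝ → ℝ := fun v => Real.exp (-(S / Hz ^ 2) * v ^ 2) with hf₃
  set G : ℝ × ℝ → ℝ := fun q => f₂ q.1 * f₃ q.2 with hG
  have hfeq : ∀ p : ℝ × ℝ × ℝ,
      Real.exp (-(S * ((p.1 / Hx) ^ 2 + (p.2.1 / Hy) ^ 2 + (p.2.2 / Hz) ^ 2)))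
        = f₁ p.1 * G p.2 := by
    intro p
    rw [hG, hf₁, hf₂, hf₃]
    simp only
    rw [← Real.exp_add, ← Real.exp_add]
    congr 1
    field_simp
    ring
  have I1 : Integrable f₁ := integrable_exp_neg_mul_sq (by positivity)
  have I2 : Integrable f₂ := integrable_exp_neg_mul_sq (by positivity)
  have I3 : Integrable f₃ := integrable_exp_neg_mul_sq (by positivity)
  have IG : Integrable G := by
    rw [hG]; exact I2.mul_prod I3
  have IF : Integrable (fun p : ℝ × ℝ × ℝ => f₁ p.1 * G p.2) := I1.mul_prod IG
  have hnn : ∀ p : ℝ × ℝ × ℝ, 0 ≤ f₁ p.1 * G p.2 := fun p => by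
    have := Real.exp_pos (-(S / Hx ^ 2) * p.1 ^ 2)
    positivity
  have hA : MeasurableSet (sᶜ ×ˢ (univ : Set (ℝ × ℝ))) :=
    (measurableSet_Icc.compl).prod MeasurableSet.univ
  have hB : MeasurableSet ((univ : Set ℝ) ×ˢ (tᶜ ×ˢ (univ : Set ℝ))) :=
    MeasurableSet.univ.prod ((measurableSet_Icc.compl).prod MeasurableSet.univ)
  have hC : MeasurableSet ((univ : Set ℝ) ×ˢ ((univ : Set ℝ) ×ˢ uᶜ)) :=
    MeasurableSet.univ.prod (MeasurableSet.univ.prod measurableSet_Icc.compl)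
  have hcompl : (s ×ˢ t ×ˢ u)ᶜ
      = sᶜ ×ˢ (univ : Set (ℝ × ℝ))
        ∪ ((univ : Set ℝ) ×ˢ (tᶜ ×ˢ (univ : Set ℝ))
          ∪ (univ : Set ℝ) ×ˢ ((univ : Set ℝ) ×ˢ uᶜ)) := by
    rw [Set.compl_prod_eq_union, Set.compl_prod_eq_union, Set.prod_union]
  calc (∫ x in (s ×ˢ t ×ˢ u)ᶜ,
        Real.exp (-(S * ((x.1 / Hx) ^ 2 + (x.2.1 / Hy) ^ 2 + (x.2.2 / Hz) ^ 2))))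
      = ∫ p in (s ×ˢ t ×ˢ u)ᶜ, f₁ p.1 * G p.2 := by
        exact integral_congr_ae (ae_of_all _ fun p => hfeq p)
    _ ≤ (∫ p in sᶜ ×ˢ (univ : Set (ℝ × ℝ)), f₁ p.1 * G p.2)
        + ((∫ p in (univ : Set ℝ) ×ˢ (tᶜ ×ˢ (univ : Set ℝ)), f₁ p.1 * G p.2)
          + ∫ p in (univ : Set ℝ) ×ˢ ((univ : Set ℝ) ×ˢ uᶜ), f₁ p.1 * G p.2) := by
        rw [hcompl]
        refine (setIntegral_union_le IF hnn hA (hB.union hC)).trans ?_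
        gcongr
        exact setIntegral_union_le IF hnn hB hC
    _ ≤ 3 * (Real.pi / S) ^ ((3 : ℝ) / 2) * (Hx * Hy * Hz) * erfc (Real.sqrt S) := by
        have eA : (∫ p in sᶜ ×ˢ (univ : Set (ℝ × ℝ)), f₁ p.1 * G p.2)
            = (∫ v in sᶜ, f₁ v) * ((∫ v, f₂ v) * (∫ v, f₃ v)) := by
          rw [Measure.volume_eq_prod, setIntegral_prod_mul f₁ G, setIntegral_univ, hG,
            Measure.volume_eq_prod, integral_prod_mul]
        have eB : (∫ p in (univ : Set ℝ) ×ˢ (tᶜ ×ˢ (univ : Set ℝ)), f₁ p.1 * G p.2)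
            = (∫ v, f₁ v) * ((∫ v in tᶜ, f₂ v) * (∫ v, f₃ v)) := by
          rw [Measure.volume_eq_prod, setIntegral_prod_mul f₁ G, setIntegral_univ, hG,
            Measure.volume_eq_prod, setIntegral_prod_mul f₂ f₃, setIntegral_univ]
        have eC : (∫ p in (univ : Set ℝ) ×ˢ ((univ : Set ℝ) ×ˢ uᶜ), f₁ p.1 * G p.2)
            = (∫ v, f₁ v) * ((∫ v, f₂ v) * (∫ v in uᶜ, f₃ v)) := by
          rw [Measure.volume_eq_prod, setIntegral_prod_mul f₁ G, setIntegral_univ, hG,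
            Measure.volume_eq_prod, setIntegral_prod_mul f₂ f₃, setIntegral_univ]
        rw [eA, eB, eC, hf₁, hf₂, hf₃, hs, ht, hu,
          gauss_line S Hx hS hHx, gauss_line S Hy hS hHy, gauss_line S Hz hS hHz,
          gauss_tail S Hx hS hHx, gauss_tail S Hy hS hHy, gauss_tail S Hz hS hHz]
        have hrpow : (Real.pi / S) ^ ((3 : ℝ) / 2) = Real.sqrt (Real.pi / S) ^ 3 := by
          rw [Real.sqrt_eq_rpow, ← Real.rpow_natCast ((Real.pi / S) ^ ((1 : ℝ)/2)) 3,
            ← Real.rpow_mul (by positivity)]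
          norm_num
        rw [hrpow]
        apply le_of_eq
        ring
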